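/- Let θ be an infinite cardinal and let F be a filter over a cardinal λ which is not (ω,θ)-regular. Then there is no sequence ⟨f_ε : ε < θ⟩ of functions f_ε : λ → λ such that (i) f_ζ(α) ≤ f_ε(α) for all ε ≤ ζ < θ and all α < λ, and (ii) for every ε < θ the set {α < λ : f_{ε+1}(α) < f_ε(α)} belongs to F. -/

import Mathlib

open Cardinal Set

/-- `u` is a member of `[λ]^{ℵ₀-bd}`: a countably infinite subset of `λ`
(identified with the set of ordinals below `λ.ord`) which is bounded, i.e. `sup u < λ`. -/
def BddCtbl (lam : Cardinal.{0}) (u : Set Ordinal.{0}) : Prop :=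
  u ⊆ Set.Iio lam.ord ∧ u.Countable ∧ u.Infinite ∧ sSup u < lam.ord

/-- `λ` is a Magidor cardinal: `λ → [λ]^{ℵ₀-bd}_λ`, i.e. for every coloring
`f : [λ]^{ℵ₀-bd} → λ` there is `A ⊆ λ` of full cardinality `λ` such that `f`
omits some color `γ < λ` on the countable bounded subsets of `A`. -/
def IsMagidorCard (lam : Cardinal.{0}) : Prop :=
  ∀ f : Set Ordinal.{0} → Ordinal.{0},
    (∀ u, BddCtbl lam u → f u < lam.ord) →
    ∃ A : Set Ordinal.{0}, A ⊆ Set.Iio lam.ord ∧ #A = Cardinal.lift.{1} lam ∧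
      ∃ γ < lam.ord, ∀ u ⊆ A, BddCtbl lam u → f u ≠ γ

/-- `F` is a filter over `λ`: a nonempty collection of subsets of `λ` closed under
supersets (within `λ`) and finite (binary) intersections, with `∅ ∉ F`. -/
def IsFilterOn (lam : Cardinal.{0}) (F : Set (Set Ordinal.{0})) : Prop :=
  F.Nonempty ∧ (∀ x ∈ F, x ⊆ Set.Iio lam.ord) ∧
    (∀ x ∈ F, ∀ y, x ⊆ y → y ⊆ Set.Iio lam.ord → y ∈ F) ∧
    (∀ x ∈ F, ∀ y ∈ F, x ∩ y ∈ F) ∧ ∅ ∉ F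

/-- `F` is a Magidor filter over `λ`: a uniform filter over `λ` containing all
end-segments of `λ`, such that every coloring `c : [λ]^{ℵ₀-bd} → λ` omits some
color `γ < λ` on the countable bounded subsets of some member of `F`. -/
def IsMagidorFilter (lam : Cardinal.{0}) (F : Set (Set Ordinal.{0})) : Prop :=
  IsFilterOn lam F ∧
  (∀ x ∈ F, #x = Cardinal.lift.{1} lam) ∧
  (∀ α < lam.ord, {β | α ≤ β ∧ β < lam.ord} ∈ F) ∧
  (∀ c : Set Ordinal.{0} → Ordinal.{0}, (∀ u, BddCtbl lam u → c u < lam.ord) →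
    ∃ x ∈ F, ∃ γ < lam.ord, ∀ u ⊆ x, BddCtbl lam u → c u ≠ γ)

/-- `F` is not `(ω,θ)`-regular: every subfamily `A ⊆ F` of cardinality `θ` has a
countably infinite subfamily `B` with nonempty intersection. -/
def NotOmegaRegular (F : Set (Set Ordinal.{0})) (θ : Cardinal.{0}) : Prop :=
  ∀ A ⊆ F, #A = Cardinal.lift.{1} θ →
    ∃ B ⊆ A, B.Countable ∧ B.Infinite ∧ (⋂₀ B).Nonempty

/-- if `F` is a filter over `λ` which is not `(ω,θ)`-regular (`θ` an
infinite cardinal), then there is no sequence `⟨f_ε : ε < θ⟩` of functions `λ → λ`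
which is pointwise non-increasing in `ε` and such that each set
`{α < λ : f_{ε+1}(α) < f_ε(α)}` belongs to `F`. -/
theorem key_contradiction (lam θ : Cardinal.{0}) (hθ : Cardinal.aleph0 ≤ θ)
    (f : Ordinal.{0} → Ordinal.{0} → Ordinal.{0})
    (hmono : ∀ ε ζ : Ordinal.{0}, ε ≤ ζ → ζ < θ.ord → ∀ α < lam.ord, f ζ α ≤ f ε α)
    (α : Ordinal.{0}) (hα : α < lam.ord) (E : Set Ordinal.{0}) (hEinf : E.Infinite)
    (hEsub : E ⊆ Set.Iio θ.ord) (hEd : ∀ ε ∈ E, f (ε + 1) α < f ε α) : False := by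
  -- extract a strictly increasing ℕ-sequence from E
  have u := hEinf.natEmbedding
  have hWF : E.IsWF := (Set.isWF_univ_iff.2 ⟨Ordinal.lt_wf⟩).mono (Set.subset_univ E)
  have hPWO : E.IsPWO := Set.isPWO_iff_isWF.2 hWF
  obtain ⟨g, hg⟩ := hPWO.exists_monotone_subseq (f := fun n => (u n : Ordinal)) (fun n => (u n).2)
  set e : ℕ → Ordinal := (fun n => (u n : Ordinal)) ∘ g with he
  have heinj : Function.Injective e := fun a b hab => by
    have := u.injective (Subtype.ext hab)
    exact g.injective this
  have hesm : StrictMono e := hg.strictMono_of_injective heinj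
  have heE : ∀ n, e n ∈ E := fun n => (u (g n)).2
  have hdesc : ∀ n, f (e (n + 1)) α < f (e n) α := by
    intro n
    have h1 : e n + 1 ≤ e (n + 1) := by
      rw [Ordinal.add_one_eq_succ]
      exact Order.succ_le_iff.2 (hesm (Nat.lt_succ_self n))
    have h2 : f (e (n + 1)) α ≤ f (e n + 1) α :=
      hmono _ _ h1 (hEsub (heE (n + 1))) α hα
    exact lt_of_le_of_lt h2 (hEd (e n) (heE n))
  exact RelEmbedding.not_wellFounded
    (RelEmbedding.natGT (fun n => f (e n) α) hdesc) Ordinal.lt_wf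

theorem no_descending_sequence (lam θ : Cardinal.{0}) (hθ : Cardinal.aleph0 ≤ θ)
    (F : Set (Set Ordinal.{0})) (hF : IsFilterOn lam F)
    (hirr : NotOmegaRegular F θ) :
    ¬ ∃ f : Ordinal.{0} → Ordinal.{0} → Ordinal.{0},
      (∀ ε < θ.ord, ∀ α < lam.ord, f ε α < lam.ord) ∧
      (∀ ε ζ : Ordinal.{0}, ε ≤ ζ → ζ < θ.ord → ∀ α < lam.ord, f ζ α ≤ f ε α) ∧
      (∀ ε < θ.ord, {α | α < lam.ord ∧ f (ε + 1) α < f ε α} ∈ F) := by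
  rintro ⟨f, hlt, hmono, hin⟩
  set Aset : Ordinal.{0} → Set Ordinal.{0} :=
    fun ε => {α | α < lam.ord ∧ f (ε + 1) α < f ε α} with hAsetdef
  set A : Set (Set Ordinal.{0}) := Aset '' Set.Iio θ.ord with hAdef
  have hAF : A ⊆ F := by rintro _ ⟨ε, hε, rfl⟩; exact hin ε hε
  have main : ∃ α, α < lam.ord ∧ ∃ E : Set Ordinal.{0}, E.Infinite ∧ E ⊆ Set.Iio θ.ord ∧
      ∀ ε ∈ E, f (ε + 1) α < f ε α := by
    by_cases hcard : #A = Cardinal.lift.{1} θ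
    · obtain ⟨B, hBA, hBc, hBinf, α, hα⟩ := hirr A hAF hcard
      have hsel : ∀ b ∈ B, ∃ ε, ε < θ.ord ∧ Aset ε = b := by
        intro b hb
        obtain ⟨ε, hε, rfl⟩ := hBA hb
        exact ⟨ε, hε, rfl⟩
      choose! φ h1 h2 using hsel
      have hinjOn : Set.InjOn φ B := by
        intro b hb b' hb' hbb'
        rw [← h2 b hb, ← h2 b' hb', hbb']
      have hEinf : (φ '' B).Infinite := (Set.infinite_image_iff hinjOn).2 hBinf
      obtain ⟨b0, hb0⟩ := hBinf.nonempty
      have hαmem : α ∈ Aset (φ b0) := by rw [h2 b0 hb0]; exact hα b0 hb0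
      refine ⟨α, hαmem.1, φ '' B, hEinf, ?_, ?_⟩
      · rintro _ ⟨b, hb, rfl⟩; exact h1 b hb
      · rintro _ ⟨b, hb, rfl⟩
        have : α ∈ Aset (φ b) := by rw [h2 b hb]; exact hα b hb
        exact this.2
    · -- #A < lift θ : pigeonhole gives an infinite fiber
      have hle : #A ≤ Cardinal.lift.{1} θ := by
        calc #A ≤ #(Set.Iio θ.ord) := Cardinal.mk_image_le
        _ = Cardinal.lift.{1} θ := by rw [Ordinal.mk_Iio_ordinal, Cardinal.card_ord]
      have hlt' : #A < #(Set.Iio θ.ord) := by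
        rw [Ordinal.mk_Iio_ordinal, Cardinal.card_ord]
        exact lt_of_le_of_ne hle hcard
      have hIinf : Infinite ↥(Set.Iio (Cardinal.ord θ)) := by
        rw [Cardinal.infinite_iff, Ordinal.mk_Iio_ordinal, Cardinal.card_ord]
        exact Cardinal.aleph0_le_lift.2 hθ
      set G : ↥(Set.Iio (Cardinal.ord θ)) → ↥A :=
        fun ε => ⟨Aset ε.1, Set.mem_image_of_mem _ ε.2⟩ with hGdef
      obtain ⟨S, hS⟩ : ∃ S : A, Infinite (G ⁻¹' {S}) := by
        rcases finite_or_infinite A with hfin | hinf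
        · exact Finite.exists_infinite_fiber G
        · exact @Cardinal.exists_infinite_fiber' _ _ G hlt' hinf
      have hSF : (S : Set Ordinal.{0}) ∈ F := hAF S.2
      have hSne : (S : Set Ordinal.{0}).Nonempty := by
        rw [Set.nonempty_iff_ne_empty]
        intro hemp
        rw [hemp] at hSF
        exact hF.2.2.2.2 hSF
      obtain ⟨α, hαS⟩ := hSne
      set E : Set Ordinal.{0} := (fun x => x.1) '' (G ⁻¹' {S}) with hEdef
      have hEinf : E.Infinite := by
        have : (G ⁻¹' {S}).Infinite := Set.infinite_coe_iff.1 hS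
        exact this.image (Set.injOn_of_injective Subtype.val_injective)
      have hmemAset : ∀ ε ∈ E, α ∈ Aset ε := by
        rintro _ ⟨x, hx, rfl⟩
        have : Aset x.1 = (S : Set Ordinal.{0}) := congrArg Subtype.val hx
        rw [this]; exact hαS
      obtain ⟨ε0, hε0⟩ := hEinf.nonempty
      refine ⟨α, (hmemAset ε0 hε0).1, E, hEinf, ?_, fun ε hε => (hmemAset ε hε).2⟩
      rintro _ ⟨x, _, rfl⟩; exact x.2
  obtain ⟨α, hα, E, hEinf, hEsub, hEd⟩ := main
  exact key_contradiction lam θ hθ f hmono α hα E hEinf hEsub hEd
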